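/- Let (S,V,h) be a spin space and Γ ∈ A(h) with Γ² = -id_S. For every v ∈ V, Γv = (id_S + Γ)·v·(id_S + Γ)⁻¹; consequently, the representation γ : Cl(h) → End S extending v ↦ Γv is equivalent to the inclusion representation Cl(h) → End S. -/
import Mathlib


/-- Let `(S, V, h)` be a spin space and `Γ ∈ A(h)` with `Γ² = -id_S`.  Then
`id_S + Γ` is invertible and `Γv = (id_S + Γ) v (id_S + Γ)⁻¹` for every `v ∈ V`; consequently
the representation `γ : Cl(h) → End S` extending `v ↦ Γv` is equivalent to the inclusion
representation `inc : Cl(h) → End S` (extending `v ↦ v`):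
`γ a = (id_S + Γ) (inc a) (id_S + Γ)⁻¹` for all `a ∈ Cl(h)`. -/
theorem gamma_equivalent_to_inclusion
    (S : Type*) [AddCommGroup S] [Module ℂ S]
    (V : Submodule ℝ (Module.End ℂ S))
    (h : QuadraticForm ℝ V)
    (hcl : ∀ v : V, (v : Module.End ℂ S) * (v : Module.End ℂ S) = h v • 1)
    (Γ : Module.End ℂ S)
    (hΓanti : ∀ v ∈ V, Γ * v = -(v * Γ))
    (hΓsq : Γ * Γ = -1)
    (γ inc : CliffordAlgebra h →ₐ[ℝ] Module.End ℂ S)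
    (hγ : ∀ v : V, γ (CliffordAlgebra.ι h v) = Γ * (v : Module.End ℂ S))
    (hinc : ∀ v : V, inc (CliffordAlgebra.ι h v) = (v : Module.End ℂ S)) :
    IsUnit ((1 : Module.End ℂ S) + Γ) ∧
    (∀ v : V, Γ * (v : Module.End ℂ S) =
        (1 + Γ) * (v : Module.End ℂ S) * Ring.inverse (1 + Γ)) ∧
    ∀ a : CliffordAlgebra h, γ a = (1 + Γ) * inc a * Ring.inverse (1 + Γ) := by
  set u : Module.End ℂ S := (2⁻¹ : ℂ) • (1 - Γ) with hu
  have key : ((1 : Module.End ℂ S) + Γ) * (1 - Γ) = (2 : ℂ) • 1 := by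
    have h1 : ((1 : Module.End ℂ S) + Γ) * (1 - Γ) = 1 - Γ * Γ := by noncomm_ring
    rw [h1, hΓsq, sub_neg_eq_add, two_smul]
  have key2 : ((1 : Module.End ℂ S) - Γ) * (1 + Γ) = (2 : ℂ) • 1 := by
    have h1 : ((1 : Module.End ℂ S) - Γ) * (1 + Γ) = 1 - Γ * Γ := by noncomm_ring
    rw [h1, hΓsq, sub_neg_eq_add, two_smul]
  have hmul : ((1 : Module.End ℂ S) + Γ) * u = 1 := by
    rw [hu, mul_smul_comm, key, smul_smul]
    norm_num
  have hmul2 : u * ((1 : Module.End ℂ S) + Γ) = 1 := by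
    rw [hu, smul_mul_assoc, key2, smul_smul]
    norm_num
  set U : (Module.End ℂ S)ˣ := ⟨1 + Γ, u, hmul, hmul2⟩ with hU
  have hunit : IsUnit ((1 : Module.End ℂ S) + Γ) := ⟨U, rfl⟩
  have hinv : Ring.inverse ((1 : Module.End ℂ S) + Γ) = u := by
    rw [show ((1 : Module.End ℂ S) + Γ) = (U : Module.End ℂ S) from rfl,
      Ring.inverse_unit]
    rfl
  have hconj : ∀ v : V, Γ * (v : Module.End ℂ S) =
      (1 + Γ) * (v : Module.End ℂ S) * Ring.inverse (1 + Γ) := by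
    intro v
    have hv := hΓanti v v.2
    rw [hinv, hu, mul_smul_comm]
    have : ((1 : Module.End ℂ S) + Γ) * (v : Module.End ℂ S) * (1 - Γ)
        = (2 : ℂ) • (Γ * (v : Module.End ℂ S)) := by
      have hΓvΓ : Γ * (v : Module.End ℂ S) * Γ = (v : Module.End ℂ S) := by
        rw [hv]
        calc -((v : Module.End ℂ S) * Γ) * Γ = -((v : Module.End ℂ S) * (Γ * Γ)) := by
              noncomm_ring
        _ = (v : Module.End ℂ S) := by rw [hΓsq]; noncomm_ring
      have expand : ((1 : Module.End ℂ S) + Γ) * (v : Module.End ℂ S) * (1 - Γ)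
          = (v : Module.End ℂ S) - (v : Module.End ℂ S) * Γ + Γ * (v : Module.End ℂ S)
            - Γ * (v : Module.End ℂ S) * Γ := by noncomm_ring
      rw [expand, hΓvΓ, hv]
      rw [two_smul]
      noncomm_ring
    rw [this, smul_smul]
    norm_num
  refine ⟨hunit, hconj, ?_⟩
  intro a
  induction a using CliffordAlgebra.induction with
  | algebraMap r =>
      rw [AlgHom.commutes, AlgHom.commutes]
      rw [Algebra.algebraMap_eq_smul_one, mul_smul_comm, smul_mul_assoc, mul_one,
        hinv, hmul]
  | ι v =>
      rw [hγ, hinc, hconj]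
  | mul x y hx hy =>
      rw [map_mul, map_mul, hx, hy]
      have : ((1 : Module.End ℂ S) + Γ) * inc x * Ring.inverse (1 + Γ) *
          ((1 + Γ) * inc y * Ring.inverse (1 + Γ))
          = (1 + Γ) * inc x * (Ring.inverse (1 + Γ) * (1 + Γ)) * inc y
            * Ring.inverse (1 + Γ) := by noncomm_ring
      rw [this, hinv, hmul2, mul_one]
      noncomm_ring
  | add x y hx hy =>
      rw [map_add, map_add, hx, hy]
      noncomm_ring
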